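/- Let G be a P₆-free graph, Ω a potential maximal clique in G, and D₁, D₂ two distinct components of G − Ω. For all v₁ ∈ N(D₁) \ N(D₂) and v₂ ∈ N(D₂) \ N(D₁) with v₁v₂ not an edge of G, the vertex v₁ is complete to D₁ and v₂ is complete to D₂. -/

import Mathlib

open SimpleGraph

variable {V : Type*}

/-- `D` is (the vertex set of) a connected component of `G - S`. -/
def IsCompOf (G : SimpleGraph V) (S D : Set V) : Prop :=
  D.Nonempty ∧ Disjoint D S ∧ (G.induce D).Connected ∧
    ∀ v ∈ D, ∀ w : V, G.Adj v w → w ∉ S → w ∈ D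

/-- The open neighborhood `N(D)` of a vertex set `D`. -/
def nbhd (G : SimpleGraph V) (D : Set V) : Set V :=
  {v | v ∉ D ∧ ∃ d ∈ D, G.Adj v d}

/-- The closed neighborhood `N[D]` of a vertex set `D`. -/
def closedNbhd (G : SimpleGraph V) (D : Set V) : Set V :=
  D ∪ nbhd G D

/-- `D` is full to `S`: every vertex of `S` has a neighbor in `D`. -/
def FullTo (G : SimpleGraph V) (S D : Set V) : Prop :=
  ∀ s ∈ S, ∃ d ∈ D, G.Adj s d

/-- `S` is a minimal separator: `G - S` has at least two components full to `S`. -/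
def IsMinSep (G : SimpleGraph V) (S : Set V) : Prop :=
  ∃ D₁ D₂ : Set V, IsCompOf G S D₁ ∧ IsCompOf G S D₂ ∧ D₁ ≠ D₂ ∧
    FullTo G S D₁ ∧ FullTo G S D₂

/-- A graph is `P₆`-free if it contains no induced path on 6 vertices. -/
def P6Free (G : SimpleGraph V) : Prop :=
  IsEmpty (pathGraph 6 ↪g G)

/-- `Ω` is a potential maximal clique of `G`. -/
def IsPMC (G : SimpleGraph V) (Ω : Set V) : Prop :=
  (∀ D : Set V, IsCompOf G Ω D → nbhd G D ≠ Ω) ∧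
  (∀ u ∈ Ω, ∀ v ∈ Ω, u ≠ v → ¬ G.Adj u v →
    ∃ D : Set V, IsCompOf G Ω D ∧ u ∈ nbhd G D ∧ v ∈ nbhd G D)

/-! ### Auxiliary lemmas -/

lemma comp_closed {G : SimpleGraph V} {Ω D : Set V} (hD : IsCompOf G Ω D) {v w : V}
    (hv : v ∈ D) (h : G.Adj v w) (hw : w ∉ Ω) : w ∈ D :=
  hD.2.2.2 v hv w h hw

lemma comp_notmem {G : SimpleGraph V} {Ω D : Set V} (hD : IsCompOf G Ω D) {v : V}
    (hv : v ∈ D) : v ∉ Ω :=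
  fun h => Set.disjoint_left.mp hD.2.1 hv h

lemma nbhd_mem_sep {G : SimpleGraph V} {Ω D : Set V} (hD : IsCompOf G Ω D) {v : V}
    (hv : v ∈ nbhd G D) : v ∈ Ω := by
  by_contra h
  obtain ⟨hvD, d, hd, hadj⟩ := hv
  exact hvD (comp_closed hD hd hadj.symm h)

lemma comp_subset_of_mem {G : SimpleGraph V} {Ω D D' : Set V} (hD : IsCompOf G Ω D)
    (hD' : IsCompOf G Ω D') {x : V} (hx : x ∈ D) (hx' : x ∈ D') : D ⊆ D' := by
  intro y hy
  obtain ⟨w⟩ := hD.2.2.1.preconnected ⟨x, hx⟩ ⟨y, hy⟩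
  suffices H : ∀ (u z : ↥D) (p : (G.induce D).Walk u z), (u : V) ∈ D' → (z : V) ∈ D' from
    H _ _ w hx'
  intro u z p hu
  induction p with
  | nil => exact hu
  | cons h p ih =>
    rename_i a c _
    have hadj : G.Adj (a : V) (c : V) := h
    exact ih (comp_closed hD' hu hadj (comp_notmem hD c.2))

lemma comps_disjoint {G : SimpleGraph V} {Ω D D' : Set V} (hD : IsCompOf G Ω D)
    (hD' : IsCompOf G Ω D') (hne : D ≠ D') : Disjoint D D' := by
  rw [Set.disjoint_left]
  intro x hx hx'
  exact hne (Set.Subset.antisymm (comp_subset_of_mem hD hD' hx hx')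
    (comp_subset_of_mem hD' hD hx' hx))

lemma no_edge {G : SimpleGraph V} {Ω D D' : Set V} (hD : IsCompOf G Ω D)
    (hD' : IsCompOf G Ω D') (hdisj : Disjoint D D') {a b : V}
    (ha : a ∈ D) (hb : b ∈ D') : ¬ G.Adj a b :=
  fun h => Set.disjoint_left.mp hdisj ha (comp_closed hD' hb h.symm (comp_notmem hD ha))

lemma exists_chain {G : SimpleGraph V} {Ω D : Set V} (hD : IsCompOf G Ω D) {a b : V}
    (ha : a ∈ D) (hb : b ∈ D) :
    ∃ L : List V, L ≠ [] ∧ L.Chain' G.Adj ∧ (∀ x ∈ L, x ∈ D) ∧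
      L.head? = some a ∧ L.getLast? = some b := by
  obtain ⟨w⟩ := hD.2.2.1.preconnected ⟨a, ha⟩ ⟨b, hb⟩
  refine ⟨w.support.map Subtype.val, fun h => w.support_ne_nil (List.map_eq_nil_iff.mp h),
    ?_, ?_, ?_, ?_⟩
  · exact List.isChain_map_of_isChain Subtype.val
      (fun a b (h : (G.induce D).Adj a b) => (h : G.Adj a b)) w.isChain_adj_support
  · intro x hx
    simp only [List.mem_map] at hx
    obtain ⟨⟨y, hy⟩, _, rfl⟩ := hx
    exact hy
  · rw [List.head?_map, List.head?_eq_head w.support_ne_nil, w.head_support]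
    rfl
  · rw [List.getLast?_map, List.getLast?_eq_getLast_of_ne_nil w.support_ne_nil,
      w.getLast_support]
    rfl

lemma exists_flip {R : V → V → Prop} {P : V → Prop} [DecidablePred P] :
    ∀ (L : List V) (a b : V), L.Chain' R → L.head? = some a → L.getLast? = some b →
      ¬ P a → P b → ∃ x ∈ L, ∃ y ∈ L, R x y ∧ ¬ P x ∧ P y
  | [], a, b, _, ha, _, _, _ => by simp at ha
  | [x], a, b, _, ha, hb, hpa, hpb => by
    have hxa : x = a := by simpa using ha
    have hxb : x = b := by simpa using hb
    subst hxa
    exact absurd (hxb ▸ hpb) hpa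
  | x :: y :: L, a, b, hch, ha, hb, hpa, hpb => by
    have hxa : x = a := by simpa using ha
    subst hxa
    obtain ⟨hxy, hch'⟩ := List.isChain_cons_cons.mp hch
    by_cases hy : P y
    · exact ⟨x, by simp, y, by simp, hxy, hpa, hy⟩
    · obtain ⟨x', hx', y', hy', h⟩ := exists_flip (y :: L) y b hch' rfl
        (by rwa [List.getLast?_cons_cons] at hb) hy hpb
      exact ⟨x', List.mem_cons_of_mem _ hx', y', List.mem_cons_of_mem _ hy', h⟩

lemma frontier_pair {G : SimpleGraph V} {Ω D : Set V} (hD : IsCompOf G Ω D) {v dbad dg : V}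
    (hdbad : dbad ∈ D) (hdg : dg ∈ D) (hn : ¬ G.Adj v dbad) (hy : G.Adj v dg) :
    ∃ x ∈ D, ∃ y ∈ D, G.Adj x y ∧ ¬ G.Adj v x ∧ G.Adj v y := by
  classical
  obtain ⟨L, hne, hch, hmem, hhd, hlast⟩ := exists_chain hD hdbad hdg
  obtain ⟨x, hx, y, hy', hxy, hnx, hyy⟩ :=
    exists_flip (P := fun z => G.Adj v z) L dbad dg hch hhd hlast hn hy
  exact ⟨x, hmem x hx, y, hmem y hy', hxy, hnx, hyy⟩

lemma min_connector (G : SimpleGraph V) {Ω D : Set V} (hD : IsCompOf G Ω D) {v₁ v₂ : V}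
    {a₀ b₀ : V} (ha₀ : a₀ ∈ D) (hb₀ : b₀ ∈ D) (ha₀adj : G.Adj v₁ a₀) (hb₀adj : G.Adj v₂ b₀) :
    (∃ x ∈ D, G.Adj v₁ x ∧ G.Adj v₂ x) ∨
    (∃ x y, x ∈ D ∧ y ∈ D ∧ G.Adj v₁ x ∧ G.Adj v₂ y ∧ G.Adj x y ∧
      ¬ G.Adj v₁ y ∧ ¬ G.Adj v₂ x) ∨
    (∃ x y z, x ∈ D ∧ y ∈ D ∧ z ∈ D ∧ G.Adj v₁ x ∧ G.Adj x y ∧ G.Adj y z ∧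
      ¬ G.Adj v₁ y ∧ ¬ G.Adj v₁ z ∧ ¬ G.Adj x z ∧ x ≠ z) := by
  classical
  have hex : ∃ n, ∃ L : List V, L.length = n ∧ L.Chain' G.Adj ∧
      (∀ x ∈ L, x ∈ D) ∧ (∃ a, L.head? = some a ∧ G.Adj v₁ a) ∧
      (∃ b, L.getLast? = some b ∧ G.Adj v₂ b) := by
    obtain ⟨L, hne, hch, hmem, hhd, hlast⟩ := exists_chain hD ha₀ hb₀
    exact ⟨L.length, L, rfl, hch, hmem, ⟨a₀, hhd, ha₀adj⟩, ⟨b₀, hlast, hb₀adj⟩⟩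
  have hmin := fun m (hm : m < Nat.find hex) => Nat.find_min hex hm
  obtain ⟨L, hLlen, hch, hmem, ⟨a, hhd, hav⟩, ⟨b, hlast, hbv⟩⟩ := Nat.find_spec hex
  match L, hLlen, hch, hmem, hhd, hlast with
  | [], _, _, _, hhd, _ => simp at hhd
  | [x0], _, hch, hmem, hhd, hlast =>
    left
    have hxa : x0 = a := by simpa using hhd
    have hxb : x0 = b := by simpa using hlast
    subst hxa
    exact ⟨x0, hmem x0 (by simp), hav, hxb ▸ hbv⟩
  | [x0, x1], hLlen, hch, hmem, hhd, hlast =>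
    right; left
    have hxa : x0 = a := by simpa using hhd
    have hxb : x1 = b := by simpa using hlast
    subst hxa; subst hxb
    have hadj01 : G.Adj x0 x1 := (List.isChain_cons_cons.mp hch).1
    have hn : Nat.find hex = 2 := hLlen.symm ▸ rfl
    have hnv2x0 : ¬ G.Adj v₂ x0 := fun hc => hmin 1 (by omega)
      ⟨[x0], rfl, List.isChain_singleton _, fun x hx => hmem x (by simp at hx; simp [hx]),
        ⟨x0, rfl, hav⟩, ⟨x0, rfl, hc⟩⟩
    have hnv1x1 : ¬ G.Adj v₁ x1 := fun hc => hmin 1 (by omega)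
      ⟨[x1], rfl, List.isChain_singleton _, fun x hx => hmem x (by simp at hx; simp [hx]),
        ⟨x1, rfl, hc⟩, ⟨x1, rfl, hbv⟩⟩
    exact ⟨x0, x1, hmem _ (by simp), hmem _ (by simp), hav, hbv, hadj01, hnv1x1, hnv2x0⟩
  | x0 :: x1 :: x2 :: rest, hLlen, hch, hmem, hhd, hlast =>
    right; right
    have hxa : x0 = a := by simpa using hhd
    subst hxa
    obtain ⟨hadj01, hch1⟩ := List.isChain_cons_cons.mp hch
    obtain ⟨hadj12, hch2⟩ := List.isChain_cons_cons.mp hch1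
    have hn : Nat.find hex = rest.length + 3 := by rw [← hLlen]; simp
    have hlast' : (x1 :: x2 :: rest).getLast? = some b := by
      rwa [List.getLast?_cons_cons] at hlast
    have hlast'' : (x2 :: rest).getLast? = some b := by
      rwa [List.getLast?_cons_cons] at hlast'
    have hmem1 : ∀ x ∈ x1 :: x2 :: rest, x ∈ D :=
      fun x hx => hmem x (List.mem_cons_of_mem _ hx)
    have hmem2 : ∀ x ∈ x2 :: rest, x ∈ D :=
      fun x hx => hmem1 x (List.mem_cons_of_mem _ hx)
    have hnv1x1 : ¬ G.Adj v₁ x1 := fun hc => hmin (rest.length + 2) (by omega)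
      ⟨x1 :: x2 :: rest, by simp, hch1, hmem1, ⟨x1, rfl, hc⟩, ⟨b, hlast', hbv⟩⟩
    have hnv1x2 : ¬ G.Adj v₁ x2 := fun hc => hmin (rest.length + 1) (by omega)
      ⟨x2 :: rest, by simp, hch2, hmem2, ⟨x2, rfl, hc⟩, ⟨b, hlast'', hbv⟩⟩
    have hn02 : ¬ G.Adj x0 x2 := fun hc => hmin (rest.length + 2) (by omega)
      ⟨x0 :: x2 :: rest, by simp, List.isChain_cons_cons.mpr ⟨hc, hch2⟩,
        fun x hx => by
          rcases List.mem_cons.mp hx with h | h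
          · exact hmem x (by simp [h])
          · exact hmem2 x h,
        ⟨x0, rfl, hav⟩, ⟨b, by rwa [List.getLast?_cons_cons], hbv⟩⟩
    have hne02 : x0 ≠ x2 := fun hc => hnv1x2 (hc ▸ hav)
    exact ⟨x0, x1, x2, hmem _ (by simp), hmem _ (by simp), hmem _ (by simp),
      hav, hadj01, hadj12, hnv1x1, hnv1x2, hn02, hne02⟩

lemma embed6 (G : SimpleGraph V) (a0 a1 a2 a3 a4 a5 : V)
    (h01 : G.Adj a0 a1) (h12 : G.Adj a1 a2) (h23 : G.Adj a2 a3) (h34 : G.Adj a3 a4)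
    (h45 : G.Adj a4 a5)
    (n02 : ¬ G.Adj a0 a2) (n03 : ¬ G.Adj a0 a3) (n04 : ¬ G.Adj a0 a4) (n05 : ¬ G.Adj a0 a5)
    (n13 : ¬ G.Adj a1 a3) (n14 : ¬ G.Adj a1 a4) (n15 : ¬ G.Adj a1 a5)
    (n24 : ¬ G.Adj a2 a4) (n25 : ¬ G.Adj a2 a5) (n35 : ¬ G.Adj a3 a5)
    (d02 : a0 ≠ a2) (d03 : a0 ≠ a3) (d04 : a0 ≠ a4) (d05 : a0 ≠ a5)
    (d13 : a1 ≠ a3) (d14 : a1 ≠ a4) (d15 : a1 ≠ a5)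
    (d24 : a2 ≠ a4) (d25 : a2 ≠ a5) (d35 : a3 ≠ a5) :
    Nonempty (pathGraph 6 ↪g G) := by
  have e01 := h01.ne
  have e12 := h12.ne
  have e23 := h23.ne
  have e34 := h34.ne
  have e45 := h45.ne
  refine ⟨⟨⟨fun i => [a0,a1,a2,a3,a4,a5].get i, ?_⟩, ?_⟩⟩
  · intro i j h
    fin_cases i <;> fin_cases j <;>
      first
      | rfl
      | exact absurd h e01 | exact absurd h.symm e01
      | exact absurd h e12 | exact absurd h.symm e12
      | exact absurd h e23 | exact absurd h.symm e23
      | exact absurd h e34 | exact absurd h.symm e34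
      | exact absurd h e45 | exact absurd h.symm e45
      | exact absurd h d02 | exact absurd h.symm d02
      | exact absurd h d03 | exact absurd h.symm d03
      | exact absurd h d04 | exact absurd h.symm d04
      | exact absurd h d05 | exact absurd h.symm d05
      | exact absurd h d13 | exact absurd h.symm d13
      | exact absurd h d14 | exact absurd h.symm d14
      | exact absurd h d15 | exact absurd h.symm d15
      | exact absurd h d24 | exact absurd h.symm d24
      | exact absurd h d25 | exact absurd h.symm d25
      | exact absurd h d35 | exact absurd h.symm d35
  · intro i j
    constructor
    · intro h
      fin_cases i <;> fin_cases j <;>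
        first
        | exact absurd h (G.loopless.irrefl _)
        | exact pathGraph_adj.mpr (by decide)
        | exact absurd h n02 | exact absurd h.symm n02
        | exact absurd h n03 | exact absurd h.symm n03
        | exact absurd h n04 | exact absurd h.symm n04
        | exact absurd h n05 | exact absurd h.symm n05
        | exact absurd h n13 | exact absurd h.symm n13
        | exact absurd h n14 | exact absurd h.symm n14
        | exact absurd h n15 | exact absurd h.symm n15
        | exact absurd h n24 | exact absurd h.symm n24
        | exact absurd h n25 | exact absurd h.symm n25
        | exact absurd h n35 | exact absurd h.symm n35
    · intro h
      fin_cases i <;> fin_cases j <;>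
        first
        | exact absurd (pathGraph_adj.mp h) (by decide)
        | exact h01 | exact h01.symm | exact h12 | exact h12.symm
        | exact h23 | exact h23.symm | exact h34 | exact h34.symm
        | exact h45 | exact h45.symm

theorem aux_complete (G : SimpleGraph V) (hP6 : P6Free G)
    (Ω D₁ D₂ : Set V) (hΩ : IsPMC G Ω)
    (hD₁ : IsCompOf G Ω D₁) (hD₂ : IsCompOf G Ω D₂) (hne : D₁ ≠ D₂)
    (v₁ v₂ : V) (hv₁ : v₁ ∈ nbhd G D₁ \ nbhd G D₂) (hv₂ : v₂ ∈ nbhd G D₂ \ nbhd G D₁)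
    (hna : ¬ G.Adj v₁ v₂) : ∀ d ∈ D₁, G.Adj v₁ d := by
  obtain ⟨hv₁n, hv₁not⟩ := hv₁
  obtain ⟨hv₂n, hv₂not⟩ := hv₂
  have hv₁Ω : v₁ ∈ Ω := nbhd_mem_sep hD₁ hv₁n
  have hv₂Ω : v₂ ∈ Ω := nbhd_mem_sep hD₂ hv₂n
  have hA : ∀ x ∈ D₂, ¬ G.Adj v₁ x := by
    intro x hx hadj
    exact hv₁not ⟨fun h => comp_notmem hD₂ h hv₁Ω, x, hx, hadj⟩
  have hB : ∀ x ∈ D₁, ¬ G.Adj v₂ x := by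
    intro x hx hadj
    exact hv₂not ⟨fun h => comp_notmem hD₁ h hv₂Ω, x, hx, hadj⟩
  obtain ⟨hv₁D₁, dg, hdg, hdgadj⟩ := hv₁n
  obtain ⟨hv₂D₂, e, he, headj⟩ := hv₂n
  by_contra hcon
  push_neg at hcon
  obtain ⟨dbad, hdbad, hnadjbad⟩ := hcon
  have hne12 : v₁ ≠ v₂ := fun h => hB dg hdg (h ▸ hdgadj)
  obtain ⟨D, hD, hv₁D, hv₂D⟩ := hΩ.2 v₁ hv₁Ω v₂ hv₂Ω hne12 hna
  obtain ⟨hv₁notD, a₀, ha₀, ha₀adj⟩ := hv₁D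
  obtain ⟨hv₂notD, b₀, hb₀, hb₀adj⟩ := hv₂D
  have hDne1 : D ≠ D₁ := fun h => hB b₀ (h ▸ hb₀) hb₀adj
  have hDne2 : D ≠ D₂ := fun h => hA a₀ (h ▸ ha₀) ha₀adj
  have dis12 : Disjoint D₁ D₂ := comps_disjoint hD₁ hD₂ hne
  have disD1 : Disjoint D D₁ := comps_disjoint hD hD₁ hDne1
  have disD2 : Disjoint D D₂ := comps_disjoint hD hD₂ hDne2
  have dis1D : Disjoint D₁ D := disD1.symm
  -- edges between distinct components are impossible
  have nE_1D : ∀ p ∈ D₁, ∀ q ∈ D, ¬ G.Adj p q :=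
    fun p hp q hq h => no_edge hD hD₁ disD1 hq hp h.symm
  have nE_12 : ∀ p ∈ D₁, ∀ q ∈ D₂, ¬ G.Adj p q :=
    fun p hp q hq => no_edge hD₁ hD₂ dis12 hp hq
  have nE_D2 : ∀ p ∈ D, ∀ q ∈ D₂, ¬ G.Adj p q :=
    fun p hp q hq => no_edge hD hD₂ disD2 hp hq
  -- distinctness helpers
  have dmem : ∀ {A B : Set V}, Disjoint A B → ∀ p ∈ A, ∀ q ∈ B, p ≠ q :=
    fun hAB p hp q hq h => Set.disjoint_left.mp hAB hp (h.symm ▸ hq)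
  have dΩ : ∀ {A : Set V}, IsCompOf G Ω A → ∀ p ∈ A, ∀ q ∈ Ω, p ≠ q :=
    fun hACmp p hp q hq h => comp_notmem hACmp hp (h.symm ▸ hq)
  -- frontier pair in D₁
  obtain ⟨d, hd, d', hd', hdd', hnd, hd'adj⟩ :=
    frontier_pair hD₁ hdbad hdg hnadjbad hdgadj
  rcases min_connector G hD ha₀ hb₀ ha₀adj hb₀adj with
    ⟨x, hx, hxv₁, hxv₂⟩ | ⟨x, y, hx, hy, hxv₁, hyv₂, hxy, hnyv₁, hnxv₂⟩ |
    ⟨x, y, z, hx, hy, hz, hxv₁, hxy, hyz, hnyv₁, hnzv₁, hnxz, hnexz⟩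
  · obtain ⟨emb⟩ := embed6 G d d' v₁ x v₂ e
      hdd' hd'adj.symm hxv₁ hxv₂.symm headj
      (fun h => hnd h.symm) (nE_1D d hd x hx) (fun h => hB d hd h.symm) (nE_12 d hd e he)
      (nE_1D d' hd' x hx) (fun h => hB d' hd' h.symm) (nE_12 d' hd' e he)
      hna (hA e he) (nE_D2 x hx e he)
      (dΩ hD₁ d hd v₁ hv₁Ω) (dmem dis1D d hd x hx) (dΩ hD₁ d hd v₂ hv₂Ω)
      (dmem dis12 d hd e he)
      (dmem dis1D d' hd' x hx) (dΩ hD₁ d' hd' v₂ hv₂Ω) (dmem dis12 d' hd' e he)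
      hne12 ((dΩ hD₂ e he v₁ hv₁Ω).symm) (dmem disD2 x hx e he)
    exact hP6.false emb
  · obtain ⟨emb⟩ := embed6 G d d' v₁ x y v₂
      hdd' hd'adj.symm hxv₁ hxy hyv₂.symm
      (fun h => hnd h.symm) (nE_1D d hd x hx) (nE_1D d hd y hy) (fun h => hB d hd h.symm)
      (nE_1D d' hd' x hx) (nE_1D d' hd' y hy) (fun h => hB d' hd' h.symm)
      hnyv₁ hna (fun h => hnxv₂ h.symm)
      (dΩ hD₁ d hd v₁ hv₁Ω) (dmem dis1D d hd x hx) (dmem dis1D d hd y hy)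
      (dΩ hD₁ d hd v₂ hv₂Ω)
      (dmem dis1D d' hd' x hx) (dmem dis1D d' hd' y hy) (dΩ hD₁ d' hd' v₂ hv₂Ω)
      ((dΩ hD y hy v₁ hv₁Ω).symm) hne12 (dΩ hD x hx v₂ hv₂Ω)
    exact hP6.false emb
  · obtain ⟨emb⟩ := embed6 G d d' v₁ x y z
      hdd' hd'adj.symm hxv₁ hxy hyz
      (fun h => hnd h.symm) (nE_1D d hd x hx) (nE_1D d hd y hy) (nE_1D d hd z hz)
      (nE_1D d' hd' x hx) (nE_1D d' hd' y hy) (nE_1D d' hd' z hz)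
      hnyv₁ hnzv₁ hnxz
      (dΩ hD₁ d hd v₁ hv₁Ω) (dmem dis1D d hd x hx) (dmem dis1D d hd y hy)
      (dmem dis1D d hd z hz)
      (dmem dis1D d' hd' x hx) (dmem dis1D d' hd' y hy) (dmem dis1D d' hd' z hz)
      ((dΩ hD y hy v₁ hv₁Ω).symm) ((dΩ hD z hz v₁ hv₁Ω).symm) hnexz
    exact hP6.false emb

/-- For a PMC `Ω` of a `P₆`-free graph, distinct components `D₁, D₂` of `G - Ω`,
and nonadjacent `v₁ ∈ N(D₁) \ N(D₂)`, `v₂ ∈ N(D₂) \ N(D₁)`: `v₁` is complete to `D₁`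
and `v₂` is complete to `D₂`. -/
theorem statement_10 [Fintype V] (G : SimpleGraph V) (hP6 : P6Free G)
    (Ω D₁ D₂ : Set V) (hΩ : IsPMC G Ω)
    (hD₁ : IsCompOf G Ω D₁) (hD₂ : IsCompOf G Ω D₂) (hne : D₁ ≠ D₂)
    (v₁ v₂ : V) (hv₁ : v₁ ∈ nbhd G D₁ \ nbhd G D₂) (hv₂ : v₂ ∈ nbhd G D₂ \ nbhd G D₁)
    (hna : ¬ G.Adj v₁ v₂) :
    (∀ d ∈ D₁, G.Adj v₁ d) ∧ (∀ d ∈ D₂, G.Adj v₂ d) :=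
  ⟨aux_complete G hP6 Ω D₁ D₂ hΩ hD₁ hD₂ hne v₁ v₂ hv₁ hv₂ hna,
   aux_complete G hP6 Ω D₂ D₁ hΩ hD₂ hD₁ hne.symm v₂ v₁ hv₂ hv₁ (fun h => hna h.symm)⟩
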